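/- Let X and Y be Banach spaces and let H ⊆ L(X*, Y) be a closed subspace containing all finite-rank operators x ⊗ y (x ∈ X, y ∈ Y, acting as x* ↦ x*(x)·y), such that every T ∈ H is weak*-to-weakly continuous. If both X and Y are octahedral, then H is octahedral. -/

import Mathlib

open Filter Topology

noncomputable section

/-- A Banach space is octahedral (OH). -/
def IsOctahedral (Z : Type*) [NormedAddCommGroup Z] : Prop :=
  ∀ (n : ℕ) (z : Fin n → Z), (∀ i, ‖z i‖ = 1) → ∀ ε : ℝ, 0 < ε →
    ∃ w : Z, ‖w‖ = 1 ∧ ∀ i, ‖z i + w‖ > 2 - ε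

/-- Locally octahedral (LOH). -/
def IsLocallyOctahedral (Z : Type*) [NormedAddCommGroup Z] : Prop :=
  ∀ z : Z, ‖z‖ = 1 → ∀ ε : ℝ, 0 < ε →
    ∃ w : Z, ‖w‖ = 1 ∧ ‖z + w‖ > 2 - ε ∧ ‖z - w‖ > 2 - ε

/-- Weakly octahedral (WOH). -/
def IsWeaklyOctahedral (X : Type*) [NormedAddCommGroup X] [NormedSpace ℝ X] : Prop :=
  ∀ (n : ℕ) (z : Fin n → X), (∀ i, ‖z i‖ = 1) → ∀ f : X →L[ℝ] ℝ, ‖f‖ ≤ 1 →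
    ∀ ε : ℝ, 0 < ε → ∃ y : X, ‖y‖ = 1 ∧ ∀ i, ∀ t : ℝ, 0 < t →
      ‖z i + t • y‖ ≥ (1 - ε) * (|f (z i)| + t) ∧
      ‖z i - t • y‖ ≥ (1 - ε) * (|f (z i)| + t)

/-- Almost square (ASQ), sequential formulation. -/
def IsASQ (Z : Type*) [NormedAddCommGroup Z] : Prop :=
  ∀ (n : ℕ) (z : Fin n → Z), (∀ i, ‖z i‖ = 1) →
    ∃ w : ℕ → Z, (∀ k, ‖w k‖ ≤ 1) ∧
      Tendsto (fun k => ‖w k‖) atTop (nhds 1) ∧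
      ∀ i, Tendsto (fun k => ‖z i + w k‖) atTop (nhds 1) ∧
           Tendsto (fun k => ‖z i - w k‖) atTop (nhds 1)

/-- Almost square (ASQ), finite-ε formulation. -/
def IsASQeps (Z : Type*) [NormedAddCommGroup Z] : Prop :=
  ∀ (n : ℕ) (z : Fin n → Z), (∀ i, ‖z i‖ = 1) → ∀ ε : ℝ, 0 < ε →
    ∃ w : Z, ‖w‖ = 1 ∧ ∀ i, ‖z i + w‖ ≤ 1 + ε ∧ ‖z i - w‖ ≤ 1 + ε

/-- Locally almost square (LASQ), sequential formulation. -/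
def IsLASQ (Z : Type*) [NormedAddCommGroup Z] : Prop :=
  ∀ z : Z, ‖z‖ = 1 →
    ∃ w : ℕ → Z, (∀ k, ‖w k‖ ≤ 1) ∧
      Tendsto (fun k => ‖w k‖) atTop (nhds 1) ∧
      Tendsto (fun k => ‖z + w k‖) atTop (nhds 1) ∧
      Tendsto (fun k => ‖z - w k‖) atTop (nhds 1)

/-- Locally almost square (LASQ), ε formulation. -/
def IsLASQeps (Z : Type*) [NormedAddCommGroup Z] : Prop :=
  ∀ z : Z, ‖z‖ = 1 → ∀ ε : ℝ, 0 < ε →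
    ∃ w : Z, ‖w‖ = 1 ∧ ‖z + w‖ ≤ 1 + ε ∧ ‖z - w‖ ≤ 1 + ε

/-- Weakly almost square (WASQ). -/
def IsWASQ (Z : Type*) [NormedAddCommGroup Z] [NormedSpace ℝ Z] : Prop :=
  ∀ z : Z, ‖z‖ = 1 →
    ∃ w : ℕ → Z, (∀ k, ‖w k‖ ≤ 1) ∧
      Tendsto (fun k => ‖w k‖) atTop (nhds 1) ∧
      Tendsto (fun k => ‖z + w k‖) atTop (nhds 1) ∧
      Tendsto (fun k => ‖z - w k‖) atTop (nhds 1) ∧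
      ∀ f : Z →L[ℝ] ℝ, Tendsto (fun k => f (w k)) atTop (nhds 0)

/-- Local diameter two property: every slice of the unit ball has diameter two. -/
def HasLD2P (Z : Type*) [NormedAddCommGroup Z] [NormedSpace ℝ Z] : Prop :=
  ∀ f : Z →L[ℝ] ℝ, ‖f‖ = 1 → ∀ α : ℝ, 0 < α →
    Metric.diam {x : Z | ‖x‖ ≤ 1 ∧ 1 - α < f x} = 2

/-- Diameter two property: every nonempty relatively weakly open subset of the unit
ball has diameter two. -/
def HasD2P (Z : Type*) [NormedAddCommGroup Z] [NormedSpace ℝ Z] : Prop :=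
  ∀ U : Set Z, U.Nonempty → (∀ x ∈ U, ‖x‖ ≤ 1) →
    (∀ x ∈ U, ∃ (n : ℕ) (f : Fin n → Z →L[ℝ] ℝ) (δ : ℝ), 0 < δ ∧
      {y : Z | ‖y‖ ≤ 1 ∧ ∀ i, |f i y - f i x| < δ} ⊆ U) →
    Metric.diam U = 2

/-- The Schur property. -/
def HasSchurProperty (Z : Type*) [SeminormedAddCommGroup Z] [NormedSpace ℝ Z] : Prop :=
  ∀ (u : ℕ → Z) (x : Z),
    (∀ f : Z →L[ℝ] ℝ, Tendsto (fun k => f (u k)) atTop (nhds (f x))) →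
    Tendsto (fun k => ‖u k - x‖) atTop (nhds 0)

/-- The Dunford–Pettis property: every weakly compact operator is
weak-to-norm sequentially continuous. -/
def HasDPP (X : Type*) [NormedAddCommGroup X] [NormedSpace ℝ X] : Prop :=
  ∀ (Y : Type) (_ : NormedAddCommGroup Y) (_ : NormedSpace ℝ Y) (_ : CompleteSpace Y)
    (T : X →L[ℝ] Y),
    (∃ K : Set (WeakSpace ℝ Y), IsCompact K ∧
      ∀ x : X, ‖x‖ ≤ 1 → toWeakSpace ℝ Y (T x) ∈ K) →
    ∀ (u : ℕ → X) (x : X),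
      (∀ f : X →L[ℝ] ℝ, Tendsto (fun k => f (u k)) atTop (nhds (f x))) →
      Tendsto (fun k => ‖T (u k) - T x‖) atTop (nhds 0)

/-- `Z`, together with the bilinear-type map `t`, is (a realization of) the injective
tensor product `X ⊗̂_ε Y`: the span of elementary tensors is dense and the norm of any
linear combination of elementary tensors is given by the injective tensor norm. -/
def IsInjTensorProduct (X Y Z : Type*) [NormedAddCommGroup X] [NormedSpace ℝ X]
    [NormedAddCommGroup Y] [NormedSpace ℝ Y] [NormedAddCommGroup Z] [NormedSpace ℝ Z]
    (t : X → Y → Z) : Prop :=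
  (Submodule.span ℝ (Set.range fun p : X × Y => t p.1 p.2)).topologicalClosure = ⊤ ∧
  ∀ l : List (X × Y),
    ‖(l.map fun p => t p.1 p.2).sum‖ =
      sSup {s : ℝ | ∃ (f : X →L[ℝ] ℝ) (g : Y →L[ℝ] ℝ), ‖f‖ ≤ 1 ∧ ‖g‖ ≤ 1 ∧
        s = |(l.map fun p => f p.1 * g p.2).sum|}

/-- `Z`, together with the map `t`, is (a realization of) the projective tensor product
`X ⊗̂_π Y`: the span of elementary tensors is dense and the norm of any combination of
elementary tensors is the infimum of `Σ ‖xᵢ‖‖yᵢ‖` over all representations (two formal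
combinations represent the same tensor iff they agree against all pairs of functionals). -/
def IsProjTensorProduct (X Y Z : Type*) [NormedAddCommGroup X] [NormedSpace ℝ X]
    [NormedAddCommGroup Y] [NormedSpace ℝ Y] [NormedAddCommGroup Z] [NormedSpace ℝ Z]
    (t : X → Y → Z) : Prop :=
  (Submodule.span ℝ (Set.range fun p : X × Y => t p.1 p.2)).topologicalClosure = ⊤ ∧
  ∀ l : List (X × Y),
    ‖(l.map fun p => t p.1 p.2).sum‖ =
      sInf {s : ℝ | ∃ l' : List (X × Y),
        (∀ (f : X →L[ℝ] ℝ) (g : Y →L[ℝ] ℝ),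
          (l'.map fun p => f p.1 * g p.2).sum = (l.map fun p => f p.1 * g p.2).sum) ∧
        s = (l'.map fun p => ‖p.1‖ * ‖p.2‖).sum}

/-- `Z`, together with the diagonal map `δ : x ↦ x^N`, is (a realization of) the `N`-fold
injective symmetric tensor product `⊗̂_{ε,s,N} X`. -/
def IsInjSymTensorProduct (X : Type*) [NormedAddCommGroup X] [NormedSpace ℝ X] (N : ℕ)
    (Z : Type*) [NormedAddCommGroup Z] [NormedSpace ℝ Z] (δ : X → Z) : Prop :=
  (Submodule.span ℝ (Set.range δ)).topologicalClosure = ⊤ ∧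
  ∀ l : List (ℝ × X),
    ‖(l.map fun p => p.1 • δ p.2).sum‖ =
      sSup {s : ℝ | ∃ f : X →L[ℝ] ℝ, ‖f‖ ≤ 1 ∧
        s = |(l.map fun p => p.1 * (f p.2) ^ N).sum|}

/-- `Z`, together with the diagonal map `δ : x ↦ x^N`, is (a realization of) the `N`-fold
projective symmetric tensor product `⊗̂_{π,s,N} X`. -/
def IsProjSymTensorProduct (X : Type*) [NormedAddCommGroup X] [NormedSpace ℝ X] (N : ℕ)
    (Z : Type*) [NormedAddCommGroup Z] [NormedSpace ℝ Z] (δ : X → Z) : Prop :=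
  (Submodule.span ℝ (Set.range δ)).topologicalClosure = ⊤ ∧
  ∀ l : List (ℝ × X),
    ‖(l.map fun p => p.1 • δ p.2).sum‖ =
      sInf {s : ℝ | ∃ l' : List (ℝ × X),
        (∀ f : X →L[ℝ] ℝ,
          (l'.map fun p => p.1 * (f p.2) ^ N).sum = (l.map fun p => p.1 * (f p.2) ^ N).sum) ∧
        s = (l'.map fun p => |p.1| * ‖p.2‖ ^ N).sum}

/-- An operator `T : X* → Y` is weak*-to-weakly continuous. -/
def WeakStarToWeakContinuous {X Y : Type*} [NormedAddCommGroup X] [NormedSpace ℝ X]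
    [NormedAddCommGroup Y] [NormedSpace ℝ Y] (T : (X →L[ℝ] ℝ) →L[ℝ] Y) : Prop :=
  ∀ g : Y →L[ℝ] ℝ, Continuous fun f : WeakDual ℝ X => g (T f)

/-- The elementary tensor `x ⊗ y` regarded as the operator `x* ↦ x*(x) • y` in `L(X*, Y)`. -/
def elemTensor {X Y : Type*} [NormedAddCommGroup X] [NormedSpace ℝ X]
    [NormedAddCommGroup Y] [NormedSpace ℝ Y] (x : X) (y : Y) : (X →L[ℝ] ℝ) →L[ℝ] Y :=
  (ContinuousLinearMap.apply ℝ ℝ x).smulRight y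

/-- `n(Z, u) = 1`, i.e. `D(Z,u) = {f ∈ B_{Z*} : f(u) = 1}` is a norming set for `Z`. -/
def NormOneUnitary (Z : Type*) [NormedAddCommGroup Z] [NormedSpace ℝ Z] (u : Z) : Prop :=
  ‖u‖ = 1 ∧ ∀ z : Z, ‖z‖ ≤ sSup {r : ℝ | ∃ g : Z →L[ℝ] ℝ, ‖g‖ ≤ 1 ∧ g u = 1 ∧ r = |g z|}

/-- Asplund space: every closed separable subspace has separable dual. -/
def IsAsplund (Y : Type*) [NormedAddCommGroup Y] [NormedSpace ℝ Y] : Prop :=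
  ∀ S : Submodule ℝ Y, IsClosed (S : Set Y) → TopologicalSpace.SeparableSpace S →
    TopologicalSpace.SeparableSpace ((↥S) →L[ℝ] ℝ)

/-- The (metric) approximation-type property: finite-rank operators approximate the
identity uniformly on compact sets. -/
def HasAP (E : Type*) [NormedAddCommGroup E] [NormedSpace ℝ E] : Prop :=
  ∀ K : Set E, IsCompact K → ∀ ε : ℝ, 0 < ε →
    ∃ T : E →L[ℝ] E, FiniteDimensional ℝ (LinearMap.range (T : E →ₗ[ℝ] E)) ∧
      ∀ x ∈ K, ‖T x - x‖ ≤ ε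

end

section Aux
open NormedSpace
variable {X : Type*} [NormedAddCommGroup X] [NormedSpace ℝ X]

lemma exists_norming (z : X) {r : ℝ} (hr : r < ‖z‖) :
    ∃ f : X →L[ℝ] ℝ, ‖f‖ ≤ 1 ∧ r < f z := by
  have h1 : r < ‖inclusionInDoubleDual ℝ X z‖ := by
    rw [show ‖inclusionInDoubleDual ℝ X z‖ = ‖z‖ from (inclusionInDoubleDualLi ℝ (E := X)).norm_map z]
    exact hr
  obtain ⟨f, hf1, hf2⟩ := (inclusionInDoubleDual ℝ X z).exists_lt_apply_of_lt_opNorm h1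
  rw [dual_def, Real.norm_eq_abs] at hf2
  rcases le_or_gt 0 (f z) with h | h
  · exact ⟨f, hf1.le, by rwa [abs_of_nonneg h] at hf2⟩
  · refine ⟨-f, by rw [norm_neg]; exact hf1.le, ?_⟩
    rw [ContinuousLinearMap.neg_apply]
    rwa [abs_of_neg h] at hf2

lemma weakstar_rep (φ : (X →L[ℝ] ℝ) →L[ℝ] ℝ)
    (hφ : Continuous fun f : WeakDual ℝ X => φ f) :
    ∃ x : X, ∀ f : X →L[ℝ] ℝ, φ f = f x := by
  classical
  set B := topDualPairing ℝ X with hB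
  have hnhds : (fun f : WeakDual ℝ X => φ f) ⁻¹' Metric.ball (0 : ℝ) 1 ∈ 𝓝 (0 : WeakDual ℝ X) := by
    refine hφ.continuousAt.preimage_mem_nhds ?_
    have : φ (0 : X →L[ℝ] ℝ) = 0 := map_zero φ
    convert Metric.ball_mem_nhds (0 : ℝ) one_pos using 2
    exact map_zero φ
  obtain ⟨U, hU, hsub⟩ := (LinearMap.hasBasis_weakBilin B).mem_iff.1 hnhds
  obtain ⟨s, r, hr, hUeq⟩ := (SeminormFamily.basisSets_iff _).1 hU
  have hker : ∀ f : X →L[ℝ] ℝ, (∀ x ∈ s, f x = 0) → φ f = 0 := by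
    intro f hf
    by_contra hne
    have hm : ∀ t : ℝ, |t| * |φ f| < 1 := by
      intro t
      have hmem : (t • f : WeakBilin B) ∈ U := by
        rw [hUeq, Seminorm.mem_ball_zero]
        refine Seminorm.finset_sup_apply_lt hr ?_
        intro i hi
        have : (B.toSeminormFamily i) (t • f) = ‖(t • f : X →L[ℝ] ℝ) i‖ := rfl
        rw [this, ContinuousLinearMap.smul_apply, hf i hi, smul_zero, norm_zero]
        exact hr
      have := hsub hmem
      change dist (φ (t • f : X →L[ℝ] ℝ)) 0 < 1 at this
      rw [dist_zero_right, map_smul, smul_eq_mul, Real.norm_eq_abs, abs_mul] at this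
      exact this
    have := hm (|φ f|)⁻¹
    rw [abs_inv, abs_abs, inv_mul_cancel₀ (by simpa using hne)] at this
    exact lt_irrefl 1 this
  set L : {x : X // x ∈ s} → (X →L[ℝ] ℝ) →ₗ[ℝ] ℝ := fun j =>
    { toFun := fun f => f (j : X), map_add' := fun a b => rfl, map_smul' := fun c a => rfl }
  have hKspan : (φ : (X →L[ℝ] ℝ) →ₗ[ℝ] ℝ) ∈ Submodule.span ℝ (Set.range L) := by
    apply mem_span_of_iInf_ker_le_ker
    intro f hf
    simp only [Submodule.mem_iInf, LinearMap.mem_ker] at hf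
    simp only [LinearMap.mem_ker, ContinuousLinearMap.coe_coe]
    exact hker f fun x hx => hf ⟨x, hx⟩
  obtain ⟨c, hc⟩ := (Submodule.mem_span_range_iff_exists_fun ℝ).1 hKspan
  refine ⟨∑ j, c j • (j : X), fun f => ?_⟩
  have h2 := congrArg (fun K : (X →L[ℝ] ℝ) →ₗ[ℝ] ℝ => K f) hc
  simp only [LinearMap.coe_sum, Finset.sum_apply, LinearMap.smul_apply,
    ContinuousLinearMap.coe_coe, L, LinearMap.coe_mk, AddHom.coe_mk, smul_eq_mul] at h2
  rw [← h2, map_sum]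
  simp

lemma norm_elemTensor' {Y : Type*} [NormedAddCommGroup Y] [NormedSpace ℝ Y] (x : X) (y : Y) :
    ‖(ContinuousLinearMap.apply ℝ ℝ x).smulRight y‖ = ‖x‖ * ‖y‖ := by
  rw [ContinuousLinearMap.norm_smulRight_apply]
  congr 1
  have h : (ContinuousLinearMap.apply ℝ ℝ x : (X →L[ℝ] ℝ) →L[ℝ] ℝ)
      = inclusionInDoubleDual ℝ X x := by ext f; rfl
  rw [h]
  exact (inclusionInDoubleDualLi ℝ (E := X)).norm_map x

end Aux

theorem statement1 (X Y : Type*) [NormedAddCommGroup X] [NormedSpace ℝ X] [CompleteSpace X]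
    [NormedAddCommGroup Y] [NormedSpace ℝ Y] [CompleteSpace Y]
    (H : Submodule ℝ ((X →L[ℝ] ℝ) →L[ℝ] Y))
    (hHclosed : IsClosed (H : Set ((X →L[ℝ] ℝ) →L[ℝ] Y)))
    (htens : ∀ (x : X) (y : Y), elemTensor x y ∈ H)
    (hwstar : ∀ T ∈ H, WeakStarToWeakContinuous T)
    (hX : IsOctahedral X) (hY : IsOctahedral Y) :
    @IsOctahedral ↥H (@Submodule.normedAddCommGroup ℝ ((X →L[ℝ] ℝ) →L[ℝ] Y) _ _ _ H) := by
  intro n T hT ε hε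
  -- choose δ
  set δ : ℝ := min (ε / 3) (1 / 3) with hδdef
  have hδpos : 0 < δ := lt_min (by linarith) (by norm_num)
  have hδ3 : δ ≤ 1 / 3 := min_le_right _ _
  have hδε : δ ≤ ε / 3 := min_le_left _ _
  have hδ1 : δ ≤ 1 := by linarith
  have hδsq : δ ^ 2 ≤ δ := by nlinarith
  have hδsqpos : 0 < δ ^ 2 := by positivity
  have h3δ : 3 * δ ^ 2 ≤ δ := by nlinarith
  -- step 1: near-norming functionals fᵢ for Tᵢ
  have step1 : ∀ i, ∃ f : X →L[ℝ] ℝ, ‖f‖ ≤ 1 ∧ 1 - δ ^ 2 < ‖(T i : (X →L[ℝ] ℝ) →L[ℝ] Y) f‖ := by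
    intro i
    have h1 : (1 : ℝ) - δ ^ 2 < ‖(T i : (X →L[ℝ] ℝ) →L[ℝ] Y)‖ := by
      rw [show ‖(T i : (X →L[ℝ] ℝ) →L[ℝ] Y)‖ = 1 from hT i]; linarith
    obtain ⟨f, hf1, hf2⟩ := (T i : (X →L[ℝ] ℝ) →L[ℝ] Y).exists_lt_apply_of_lt_opNorm h1
    exact ⟨f, hf1.le, hf2⟩
  choose f hf1 hf2 using step1
  -- step 2: norming functionals gᵢ for Tᵢ fᵢ
  have step2 : ∀ i, ∃ g : Y →L[ℝ] ℝ, ‖g‖ ≤ 1 ∧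
      1 - δ ^ 2 < g ((T i : (X →L[ℝ] ℝ) →L[ℝ] Y) (f i)) :=
    fun i => exists_norming _ (hf2 i)
  choose g hg1 hg2 using step2
  -- step 3: representation of gᵢ ∘ Tᵢ by xᵢ ∈ X
  have step3 : ∀ i, ∃ x : X, ∀ h : X →L[ℝ] ℝ,
      (g i) ((T i : (X →L[ℝ] ℝ) →L[ℝ] Y) h) = h x := by
    intro i
    obtain ⟨x, hx⟩ := weakstar_rep ((g i).comp (T i : (X →L[ℝ] ℝ) →L[ℝ] Y))
      (hwstar (T i) (T i).2 (g i))
    exact ⟨x, fun h => hx h⟩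
  choose x0 hx0 using step3
  have hx0norm : ∀ i, ‖x0 i‖ ≤ 1 := by
    intro i
    refine NormedSpace.norm_le_dual_bound ℝ (x0 i) zero_le_one ?_
    intro h
    rw [← hx0 i h, one_mul, Real.norm_eq_abs]
    calc |(g i) ((T i : (X →L[ℝ] ℝ) →L[ℝ] Y) h)|
        ≤ ‖g i‖ * ‖(T i : (X →L[ℝ] ℝ) →L[ℝ] Y) h‖ := (g i).le_opNorm _
      _ ≤ 1 * (‖(T i : (X →L[ℝ] ℝ) →L[ℝ] Y)‖ * ‖h‖) :=
          mul_le_mul (hg1 i) ((T i : (X →L[ℝ] ℝ) →L[ℝ] Y).le_opNorm h) (norm_nonneg _)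
            zero_le_one
      _ = ‖h‖ := by rw [show ‖(T i : (X →L[ℝ] ℝ) →L[ℝ] Y)‖ = 1 from hT i]; ring
  have hx0lb : ∀ i, 1 - δ ^ 2 < ‖x0 i‖ := by
    intro i
    have := hg2 i
    rw [hx0 i (f i)] at this
    calc 1 - δ ^ 2 < (f i) (x0 i) := this
      _ ≤ |(f i) (x0 i)| := le_abs_self _
      _ ≤ ‖f i‖ * ‖x0 i‖ := (f i).le_opNorm _
      _ ≤ 1 * ‖x0 i‖ := mul_le_mul_of_nonneg_right (hf1 i) (norm_nonneg _)
      _ = ‖x0 i‖ := one_mul _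
  have hx0pos : ∀ i, 0 < ‖x0 i‖ := fun i => lt_of_lt_of_le (by nlinarith) (hx0lb i).le
  -- step 4: octahedrality of X
  set xt : Fin n → X := fun i => ‖x0 i‖⁻¹ • x0 i with hxt
  have hxtnorm : ∀ i, ‖xt i‖ = 1 := by
    intro i
    rw [hxt]
    simp only [norm_smul, norm_inv, norm_norm]
    exact inv_mul_cancel₀ (hx0pos i).ne'
  obtain ⟨x, hxnorm, hxoct⟩ := hX n xt hxtnorm (δ ^ 2) hδsqpos
  -- step 5: norming functionals fᵢ' for xtᵢ + x
  have step5 : ∀ i, ∃ f' : X →L[ℝ] ℝ, ‖f'‖ ≤ 1 ∧ 2 - δ ^ 2 < f' (xt i + x) :=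
    fun i => exists_norming _ (hxoct i)
  choose f' hf'1 hf'2 using step5
  have hf'bd : ∀ i (z : X), ‖z‖ = 1 → f' i z ≤ 1 := by
    intro i z hz
    calc f' i z ≤ |f' i z| := le_abs_self _
      _ ≤ ‖f' i‖ * ‖z‖ := (f' i).le_opNorm z
      _ ≤ 1 := by rw [hz, mul_one]; exact hf'1 i
  have hf'xt : ∀ i, 1 - δ ^ 2 < f' i (xt i) := by
    intro i
    have h2 := hf'2 i
    rw [map_add] at h2
    have := hf'bd i x hxnorm
    linarith
  have hf'x : ∀ i, 1 - δ ^ 2 < f' i x := by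
    intro i
    have h2 := hf'2 i
    rw [map_add] at h2
    have := hf'bd i (xt i) (hxtnorm i)
    linarith
  -- step 6/7: norm of Tᵢ fᵢ' is large
  have hTf' : ∀ i, 1 - 2 * δ ^ 2 < ‖(T i : (X →L[ℝ] ℝ) →L[ℝ] Y) (f' i)‖ := by
    intro i
    have hfx0 : f' i (x0 i) = ‖x0 i‖ * f' i (xt i) := by
      have : x0 i = ‖x0 i‖ • xt i := by
        rw [hxt]; simp only [smul_smul, mul_inv_cancel₀ (hx0pos i).ne', one_smul]
      conv_lhs => rw [this]
      simp [map_smul]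
    have hgT : (g i) ((T i : (X →L[ℝ] ℝ) →L[ℝ] Y) (f' i)) = f' i (x0 i) := hx0 i (f' i)
    have hlb : 1 - 2 * δ ^ 2 < f' i (x0 i) := by
      rw [hfx0]
      have h1 := hx0lb i
      have h2 := hf'xt i
      have hd : δ ^ 2 ≤ 1 / 3 := le_trans hδsq hδ3
      nlinarith
    calc 1 - 2 * δ ^ 2 < f' i (x0 i) := hlb
      _ = (g i) ((T i : (X →L[ℝ] ℝ) →L[ℝ] Y) (f' i)) := hgT.symm
      _ ≤ |(g i) ((T i : (X →L[ℝ] ℝ) →L[ℝ] Y) (f' i))| := le_abs_self _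
      _ ≤ ‖g i‖ * ‖(T i : (X →L[ℝ] ℝ) →L[ℝ] Y) (f' i)‖ := (g i).le_opNorm _
      _ ≤ 1 * ‖(T i : (X →L[ℝ] ℝ) →L[ℝ] Y) (f' i)‖ :=
          mul_le_mul_of_nonneg_right (hg1 i) (norm_nonneg _)
      _ = _ := one_mul _
  have hTf'ub : ∀ i, ‖(T i : (X →L[ℝ] ℝ) →L[ℝ] Y) (f' i)‖ ≤ 1 := by
    intro i
    calc ‖(T i : (X →L[ℝ] ℝ) →L[ℝ] Y) (f' i)‖
        ≤ ‖(T i : (X →L[ℝ] ℝ) →L[ℝ] Y)‖ * ‖f' i‖ := ContinuousLinearMap.le_opNorm _ _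
      _ ≤ 1 * 1 := by
          rw [show ‖(T i : (X →L[ℝ] ℝ) →L[ℝ] Y)‖ = 1 from hT i]
          exact mul_le_mul_of_nonneg_left (hf'1 i) zero_le_one
      _ = 1 := one_mul _
  have hTf'pos : ∀ i, 0 < ‖(T i : (X →L[ℝ] ℝ) →L[ℝ] Y) (f' i)‖ := by
    intro i
    have hd : δ ^ 2 ≤ 1 / 3 := le_trans hδsq hδ3
    have := hTf' i
    linarith
  -- step 8: octahedrality of Y
  set yt : Fin n → Y := fun i =>
    ‖(T i : (X →L[ℝ] ℝ) →L[ℝ] Y) (f' i)‖⁻¹ • (T i : (X →L[ℝ] ℝ) →L[ℝ] Y) (f' i) with hyt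
  have hytnorm : ∀ i, ‖yt i‖ = 1 := by
    intro i
    rw [hyt]
    simp only [norm_smul, norm_inv, norm_norm]
    exact inv_mul_cancel₀ (hTf'pos i).ne'
  obtain ⟨y, hynorm, hyoct⟩ := hY n yt hytnorm δ hδpos
  -- step 9: the operator S = x ⊗ y
  refine ⟨⟨elemTensor x y, htens x y⟩, ?_, ?_⟩
  · show ‖elemTensor x y‖ = 1
    rw [show elemTensor x y = (ContinuousLinearMap.apply ℝ ℝ x).smulRight y from rfl,
      norm_elemTensor', hxnorm, hynorm, mul_one]
  · intro i
    show 2 - ε < ‖(T i : (X →L[ℝ] ℝ) →L[ℝ] Y) + elemTensor x y‖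
    set a : Y := (T i : (X →L[ℝ] ℝ) →L[ℝ] Y) (f' i) with ha
    set c : ℝ := ‖a‖ with hc
    have hcpos : 0 < c := hTf'pos i
    have happ : ((T i : (X →L[ℝ] ℝ) →L[ℝ] Y) + elemTensor x y) (f' i) = a + (f' i x) • y := rfl
    have hkey : ‖a + (f' i x) • y‖ ≤ ‖(T i : (X →L[ℝ] ℝ) →L[ℝ] Y) + elemTensor x y‖ := by
      rw [← happ]
      exact ContinuousLinearMap.unit_le_opNorm _ _ (hf'1 i)
    have hdiff1 : ‖a - yt i‖ = 1 - c := by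
      have : a - yt i = (1 - c⁻¹) • a := by
        rw [hyt]; simp only [← ha, sub_smul, one_smul]; rfl
      rw [this, norm_smul, ← hc, Real.norm_eq_abs]
      have h1 : |1 - c⁻¹| * c = |(1 - c⁻¹) * c| := by
        rw [abs_mul, abs_of_pos hcpos]
      rw [h1, sub_mul, one_mul, inv_mul_cancel₀ hcpos.ne']
      rw [abs_of_nonpos (by linarith [hTf'ub i] : c - 1 ≤ 0)]
      ring_nf
    have hdiff2 : ‖(f' i x) • y - y‖ = 1 - f' i x := by
      have : (f' i x) • y - y = (f' i x - 1) • y := by rw [sub_smul, one_smul]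
      rw [this, norm_smul, hynorm, mul_one, Real.norm_eq_abs,
        abs_of_nonpos (by linarith [hf'bd i x hxnorm] : f' i x - 1 ≤ 0)]
      ring
    have htri : ‖yt i + y‖ ≤ ‖a + (f' i x) • y‖ + ‖a - yt i‖ + ‖(f' i x) • y - y‖ := by
      have hid : yt i + y = (a + (f' i x) • y) - (a - yt i) - ((f' i x) • y - y) := by abel
      calc ‖yt i + y‖ = ‖(a + (f' i x) • y) - (a - yt i) - ((f' i x) • y - y)‖ := by rw [hid]
        _ ≤ ‖(a + (f' i x) • y) - (a - yt i)‖ + ‖(f' i x) • y - y‖ := norm_sub_le _ _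
        _ ≤ ‖a + (f' i x) • y‖ + ‖a - yt i‖ + ‖(f' i x) • y - y‖ := by
            have := norm_sub_le (a + (f' i x) • y) (a - yt i)
            linarith
    have h1 : 2 - δ < ‖yt i + y‖ := hyoct i
    have h2 : 1 - c < 2 * δ ^ 2 := by have := hTf' i; rw [← hc, ← ha] at *; linarith [hTf' i]
    have h3 : 1 - f' i x < δ ^ 2 := by linarith [hf'x i]
    have hbound : 2 - δ - 3 * δ ^ 2 < ‖a + (f' i x) • y‖ := by
      rw [hdiff1, hdiff2] at htri
      linarith
    have hfin : 2 - ε ≤ 2 - δ - 3 * δ ^ 2 := by linarith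
    linarith [hkey]
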